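/- Let η₁,…,η_n and Φ be non-negative random variables on a probability space such that Φ ≥ ∑_{i=1}^n η_i. Suppose there exist constants a ∈ (0,1) and b > 0 such that for every t > 0 and every 1 ≤ i ≤ n, the conditional probability P(η_i ≤ t | σ(η₁,…,η_{i-1})) ≤ a + b t almost surely. Then for every t > 0, log P(Φ ≤ t) ≤ 2·√(b n t / a) − n·log(1/a). -/

import Mathlib

open MeasureTheory ProbabilityTheory Set Finset



/-- Pointwise layer-cake style bound for `exp (-(L x))`. -/
lemma aux_exp_le_sum (L s : ℝ) (hL : 0 < L) (hs : 0 < s) (K : ℕ) {x : ℝ} (hx : 0 ≤ x) :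
    Real.exp (-(L * x)) ≤
      (∑ k ∈ Finset.range K,
        (Real.exp (-(L * s)) ^ k - Real.exp (-(L * s)) ^ (k + 1)) *
          (if x ≤ ((k : ℝ) + 1) * s then (1 : ℝ) else 0)) +
        Real.exp (-(L * s)) ^ K := by
  set q : ℝ := Real.exp (-(L * s)) with hq
  have hq0 : 0 < q := Real.exp_pos _
  have hq1 : q ≤ 1 := Real.exp_le_one_iff.2 (by nlinarith)
  have hw : ∀ k : ℕ, 0 ≤ q ^ k - q ^ (k + 1) := by
    intro k
    have : q ^ (k + 1) ≤ q ^ k := pow_le_pow_of_le_one hq0.le hq1 (Nat.le_succ k)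
    linarith
  have hterm_nonneg : ∀ k ∈ Finset.range K,
      0 ≤ (q ^ k - q ^ (k + 1)) * (if x ≤ ((k : ℝ) + 1) * s then (1 : ℝ) else 0) := by
    intro k _
    exact mul_nonneg (hw k) (by positivity)
  have hqpow : ∀ m : ℕ, q ^ m = Real.exp (-(L * ((m : ℝ) * s))) := by
    intro m
    rw [hq, ← Real.exp_nat_mul]
    ring_nf
  set m : ℕ := ⌊x / s⌋₊ with hm
  have hms : (m : ℝ) * s ≤ x := by
    have h1 : (m : ℝ) ≤ x / s := Nat.floor_le (by positivity)
    calc (m : ℝ) * s ≤ (x / s) * s := by nlinarith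
    _ = x := by field_simp
  by_cases hK : K ≤ m
  · -- x ≥ K s, so exp(-(Lx)) ≤ q^K
    have hKm : (K : ℝ) ≤ (m : ℝ) := Nat.cast_le.2 hK
    have hKs : (K : ℝ) * s ≤ x := le_trans (by nlinarith) hms
    have : Real.exp (-(L * x)) ≤ q ^ K := by
      rw [hqpow K]
      apply Real.exp_le_exp.2
      nlinarith
    have hsum : 0 ≤ ∑ k ∈ Finset.range K,
        (q ^ k - q ^ (k + 1)) * (if x ≤ ((k : ℝ) + 1) * s then (1 : ℝ) else 0) :=
      Finset.sum_nonneg hterm_nonneg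
    linarith
  · push_neg at hK
    have hxlt : x < ((m : ℝ) + 1) * s := by
      have := Nat.lt_floor_add_one (x / s)
      calc x = (x / s) * s := by field_simp
      _ < ((m : ℝ) + 1) * s := by nlinarith [Nat.lt_floor_add_one (x / s)]
    have hsub : Finset.Ico m K ⊆ Finset.range K := by
      intro k hk
      simp only [Finset.mem_Ico] at hk
      exact Finset.mem_range.2 hk.2
    have hIco : ∀ k ∈ Finset.Ico m K,
        (q ^ k - q ^ (k + 1)) * (if x ≤ ((k : ℝ) + 1) * s then (1 : ℝ) else 0)
          = q ^ k - q ^ (k + 1) := by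
      intro k hk
      simp only [Finset.mem_Ico] at hk
      have : x ≤ ((k : ℝ) + 1) * s := by
        have : (m : ℝ) ≤ (k : ℝ) := Nat.cast_le.2 hk.1
        nlinarith
      rw [if_pos this, mul_one]
    have htel : ∑ k ∈ Finset.Ico m K, (q ^ k - q ^ (k + 1)) = q ^ m - q ^ K := by
      rw [Finset.sum_Ico_eq_sub _ hK.le, Finset.sum_range_sub' (fun k => q ^ k),
        Finset.sum_range_sub' (fun k => q ^ k)]
      simp
    have hge : q ^ m - q ^ K ≤ ∑ k ∈ Finset.range K,
        (q ^ k - q ^ (k + 1)) * (if x ≤ ((k : ℝ) + 1) * s then (1 : ℝ) else 0) := by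
      rw [← htel, ← Finset.sum_congr rfl hIco]
      exact Finset.sum_le_sum_of_subset_of_nonneg hsub (fun k hk _ => hterm_nonneg k hk)
    have hexp : Real.exp (-(L * x)) ≤ q ^ m := by
      rw [hqpow m]
      apply Real.exp_le_exp.2
      nlinarith
    linarith


lemma aux_cK_le (a bs q : ℝ) (K : ℕ) (ha : 0 ≤ a) (hbs : 0 ≤ bs) (hq0 : 0 ≤ q) (hq1 : q < 1) :
    ∑ k ∈ Finset.range K, (q ^ k - q ^ (k + 1)) * (a + bs * ((k : ℝ) + 1)) + q ^ K
      ≤ a + bs / (1 - q) + q ^ K := by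
  have h1q : 0 < 1 - q := by linarith
  have hsplit : ∑ k ∈ Finset.range K, (q ^ k - q ^ (k + 1)) * (a + bs * ((k : ℝ) + 1))
      = a * ∑ k ∈ Finset.range K, (q ^ k - q ^ (k + 1))
        + bs * ∑ k ∈ Finset.range K, ((k : ℝ) + 1) * (q ^ k - q ^ (k + 1)) := by
    rw [Finset.mul_sum, Finset.mul_sum, ← Finset.sum_add_distrib]
    exact Finset.sum_congr rfl fun k _ => by ring
  have hT1 : ∑ k ∈ Finset.range K, (q ^ k - q ^ (k + 1)) = 1 - q ^ K := by
    rw [Finset.sum_range_sub' (fun k => q ^ k)]; simp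
  have hT2 : ∑ k ∈ Finset.range K, ((k : ℝ) + 1) * (q ^ k - q ^ (k + 1)) ≤ 1 / (1 - q) := by
    have hre : ∀ k ∈ Finset.range K, ((k : ℝ) + 1) * (q ^ k - q ^ (k + 1))
        = (((k : ℝ) + 1) * q ^ k - ((k + 1 : ℕ) + 1 : ℝ) * q ^ (k + 1)) + q ^ (k + 1) := by
      intro k _
      push_cast
      ring
    rw [Finset.sum_congr rfl hre, Finset.sum_add_distrib,
      Finset.sum_range_sub' (fun k => ((k : ℝ) + 1) * q ^ k)]
    have hgeom : ∑ k ∈ Finset.range K, q ^ (k + 1) = q * ∑ k ∈ Finset.range K, q ^ k := by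
      rw [Finset.mul_sum]
      exact Finset.sum_congr rfl fun k _ => by ring
    have hgeo2 : ∑ k ∈ Finset.range K, q ^ k ≤ 1 / (1 - q) := by
      rw [geom_sum_eq (by intro h; rw [h] at hq1; linarith : q ≠ 1)]
      have heq : (q ^ K - 1) / (q - 1) = (1 - q ^ K) / (1 - q) := by
        rw [div_eq_div_iff (by linarith) (by linarith)]
        ring
      rw [heq, div_le_div_iff₀ h1q h1q]
      nlinarith [pow_nonneg hq0 K]
    have hKq : 0 ≤ ((K : ℝ) + 1) * q ^ K := by positivity
    have : q * ∑ k ∈ Finset.range K, q ^ k ≤ q / (1 - q) := by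
      rw [div_eq_mul_one_div]
      exact mul_le_mul_of_nonneg_left hgeo2 hq0
    have : (1 : ℝ) + q / (1 - q) = 1 / (1 - q) := by field_simp; ring
    push_cast
    nlinarith [mul_le_mul_of_nonneg_left hgeo2 hq0]
  have hpowK : 0 ≤ q ^ K := pow_nonneg hq0 K
  have : a * (1 - q ^ K) ≤ a := by nlinarith
  rw [hsplit, hT1]
  have hbs2 : bs * ∑ k ∈ Finset.range K, ((k : ℝ) + 1) * (q ^ k - q ^ (k + 1))
      ≤ bs * (1 / (1 - q)) := by
    apply mul_le_mul_of_nonneg_left hT2 hbs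
  have : bs * (1 / (1 - q)) = bs / (1 - q) := by ring
  nlinarith [hbs2]


set_option maxHeartbeats 2000000 in
theorem exit_time_lower_tail_estimate {Ω : Type*} [m0 : MeasurableSpace Ω]
    (P : Measure Ω) [IsProbabilityMeasure P] (n : ℕ)
    (η : Fin n → Ω → ℝ) (Φ : Ω → ℝ)
    (hηm : ∀ i, Measurable (η i)) (hΦm : Measurable Φ)
    (hηnn : ∀ i ω, 0 ≤ η i ω) (hΦnn : ∀ ω, 0 ≤ Φ ω)
    (hsum : ∀ ω, ∑ i, η i ω ≤ Φ ω)
    (a b : ℝ) (ha : a ∈ Ioo (0:ℝ) 1) (hb : 0 < b)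
    (hcond : ∀ (i : Fin n) (t : ℝ), 0 < t →
      ∀ᵐ ω ∂P,
        (P[{ω' | η i ω' ≤ t}.indicator (fun _ => (1:ℝ)) |
            ⨆ (j : Fin n) (_ : (j : ℕ) < (i : ℕ)), MeasurableSpace.comap (η j) inferInstance]) ω
          ≤ a + b * t) :
    ∀ t : ℝ, 0 < t →
      ENNReal.log (P {ω | Φ ω ≤ t})
        ≤ ((2 * Real.sqrt (b * n * t / a) - n * Real.log (1 / a) : ℝ) : EReal) := by
  obtain ⟨ha0, ha1⟩ := ha
  intro t ht
  rcases Nat.eq_zero_or_pos n with rfl | hn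
  · have h0 : (2 * Real.sqrt (b * ((0:ℕ):ℝ) * t / a) - ((0:ℕ):ℝ) * Real.log (1 / a) : ℝ) = 0 := by
      norm_num
    rw [h0, EReal.coe_zero]
    exact ENNReal.log_le_zero_iff.2 prob_le_one
  -- main case
  have hn' : (0:ℝ) < n := by exact_mod_cast hn
  set A : Set Ω := {ω | Φ ω ≤ t} with hA_def
  have hA : MeasurableSet A := measurableSet_le hΦm measurable_const
  have hbn : 0 < b * n / (a * t) := div_pos (mul_pos hb hn') (mul_pos ha0 ht)
  obtain ⟨L, hL, hL2⟩ : ∃ L : ℝ, 0 < L ∧ L ^ 2 = b * n / (a * t) :=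
    ⟨Real.sqrt (b * n / (a * t)), Real.sqrt_pos.2 hbn, Real.sq_sqrt hbn.le⟩
  -- the σ-algebras
  set m' : Fin n → MeasurableSpace Ω := fun i =>
    ⨆ (j : Fin n) (_ : (j : ℕ) < (i : ℕ)), MeasurableSpace.comap (η j) inferInstance with hm'_def
  have hmle : ∀ i : Fin n, m' i ≤ m0 := by
    intro i
    refine iSup_le fun j => iSup_le fun _ => ?_
    exact measurable_iff_comap_le.mp (hηm j)
  -- helper: bounded measurable functions are integrable
  have hbdd_int : ∀ g : Ω → ℝ, Measurable g → (∀ ω, 0 ≤ g ω) → (∀ ω, g ω ≤ 1) →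
      Integrable g P := by
    intro g hgm hg0 hg1
    refine (integrable_const (1:ℝ)).mono' hgm.aestronglyMeasurable ?_
    filter_upwards with ω
    rw [Real.norm_eq_abs, abs_of_nonneg (hg0 ω)]
    exact hg1 ω
  have hexp_meas : ∀ j : Fin n, Measurable (fun ω => Real.exp (-(L * η j ω))) :=
    fun j => Real.measurable_exp.comp ((hηm j).const_mul L).neg
  have hexp1 : ∀ (j : Fin n) (ω : Ω), Real.exp (-(L * η j ω)) ≤ 1 :=
    fun j ω => Real.exp_le_one_iff.2 (by nlinarith [hηnn j ω, hL])
  -- main estimate for every ε > 0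
  have key : ∀ ε : ℝ, 0 < ε →
      (P A).toReal ≤ Real.exp (L * t) * (a + b / L + ε) ^ n := by
    intro ε hε
    obtain ⟨s, hs, hs1, hs2⟩ : ∃ s : ℝ, 0 < s ∧ s ≤ 1 / (2 * L) ∧ s ≤ ε / (4 * b) :=
      ⟨min (1 / (2 * L)) (ε / (4 * b)), lt_min (by positivity) (by positivity),
        min_le_left _ _, min_le_right _ _⟩
    obtain ⟨q, hq_def⟩ : ∃ q : ℝ, q = Real.exp (-(L * s)) := ⟨_, rfl⟩
    have hq0 : 0 < q := hq_def ▸ Real.exp_pos _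
    have hu1 : L * s ≤ 1 / 2 := by
      calc L * s ≤ L * (1 / (2 * L)) := by nlinarith
        _ = 1 / 2 := by field_simp
    have hqe : q * Real.exp (L * s) = 1 := by
      rw [hq_def, ← Real.exp_add]; simp
    have he : 1 + L * s ≤ Real.exp (L * s) := by
      have := Real.add_one_le_exp (L * s); linarith
    have hu0 : 0 < L * s := mul_pos hL hs
    have h1q : L * s * (1 - L * s) ≤ 1 - q := by
      have h1 : q * (1 + L * s) ≤ 1 := by nlinarith [mul_le_mul_of_nonneg_left he hq0.le]
      have h1u : (0:ℝ) < 1 + L * s := by linarith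
      nlinarith [h1, h1u, mul_pos hu0 (mul_pos hu0 hu0)]
    have h1qpos : 0 < 1 - q := lt_of_lt_of_le (by nlinarith) h1q
    have hq1 : q < 1 := by linarith
    have hbsq : b * s / (1 - q) ≤ b / L + ε / 2 := by
      have hd1 : 0 < L * s * (1 - L * s) := by nlinarith
      have step1 : b * s / (1 - q) ≤ b * s / (L * s * (1 - L * s)) :=
        div_le_div_of_nonneg_left (by positivity) hd1 h1q
      have hLs_ne : (1:ℝ) - L * s ≠ 0 := by linarith
      have step2 : b * s / (L * s * (1 - L * s)) = (b / L) / (1 - L * s) := by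
        field_simp
      have step3 : (b / L) / (1 - L * s) ≤ (b / L) * (1 + 2 * (L * s)) := by
        rw [div_le_iff₀ (by linarith)]
        have hbL0 : 0 ≤ b / L := by positivity
        nlinarith [mul_nonneg (mul_nonneg hbL0 hu0.le) (show (0:ℝ) ≤ 1 - 2 * (L * s) by linarith)]
      have step4 : (b / L) * (1 + 2 * (L * s)) = b / L + 2 * (b * s) := by
        field_simp
      have step5 : 2 * (b * s) ≤ ε / 2 := by
        have h5' : b * s ≤ b * (ε / (4 * b)) := mul_le_mul_of_nonneg_left hs2 hb.le
        have h5'' : b * (ε / (4 * b)) = ε / 4 := by field_simp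
        linarith
      linarith [step1, step2.le, step3, step4.le, step5]
    obtain ⟨K, hK⟩ := exists_pow_lt_of_lt_one (half_pos hε) hq1
    set c : ℝ := a + b / L + ε with hc_def
    have hc0 : 0 < c := by positivity
    have hcK : a + b * s / (1 - q) + q ^ K ≤ c := by
      have := hK.le
      rw [hc_def]; linarith [hbsq]
    -- conditional expectation bound
    have hcond_exp : ∀ i : Fin n,
        ∀ᵐ ω ∂P, (P[(fun ω => Real.exp (-(L * η i ω))) | m' i]) ω ≤ c := by
      intro i
      set ind : ℕ → Ω → ℝ :=
        fun k => {ω' | η i ω' ≤ ((k:ℝ) + 1) * s}.indicator (fun _ => (1:ℝ)) with hind_def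
      have hset : ∀ k : ℕ, MeasurableSet {ω' | η i ω' ≤ ((k:ℝ) + 1) * s} :=
        fun k => measurableSet_le (hηm i) measurable_const
      have hind_int : ∀ k, Integrable (ind k) P := fun k => (integrable_const 1).indicator (hset k)
      set w : ℕ → ℝ := fun k => q ^ k - q ^ (k + 1) with hw_def
      set g : Ω → ℝ := ∑ k ∈ Finset.range K, w k • ind k with hg_def
      have hg_int : Integrable g P := by
        have hgeq : g = fun ωa => ∑ k ∈ Finset.range K, (w k • ind k) ωa := by
          funext ωa; rw [hg_def, Finset.sum_apply]
        rw [hgeq]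
        exact integrable_finset_sum _ fun k _ => (hind_int k).smul (w k)
      have hf_int : Integrable (fun ω => Real.exp (-(L * η i ω))) P :=
        hbdd_int _ (hexp_meas i) (fun ω => (Real.exp_pos _).le) (fun ω => hexp1 i ω)
      have hh_int : Integrable (g + fun _ => q ^ K) P := hg_int.add (integrable_const _)
      have hfg : (fun ω => Real.exp (-(L * η i ω))) ≤ᵐ[P] (g + fun _ => q ^ K) := by
        filter_upwards with ω
        have haux := aux_exp_le_sum L s hL hs K (hηnn i ω)
        rw [← hq_def] at haux
        have hgω : g ω = ∑ k ∈ Finset.range K,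
            (q ^ k - q ^ (k + 1)) * (if η i ω ≤ ((k:ℝ) + 1) * s then (1:ℝ) else 0) := by
          rw [hg_def, Finset.sum_apply]
          refine Finset.sum_congr rfl fun k _ => ?_
          rw [Pi.smul_apply, smul_eq_mul, hind_def]
          simp [Set.indicator_apply, Set.mem_setOf_eq, hw_def]
        rw [Pi.add_apply, hgω]
        exact haux
      have h1 : P[(fun ω => Real.exp (-(L * η i ω))) | m' i] ≤ᵐ[P]
          P[(g + fun _ => q ^ K) | m' i] := condExp_mono hf_int hh_int hfg
      have h2 : P[(g + fun _ => q ^ K) | m' i] =ᵐ[P]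
          P[g | m' i] + P[(fun _ => q ^ K) | m' i] := condExp_add hg_int (integrable_const _) (m' i)
      have h2' : P[(fun _ : Ω => q ^ K) | m' i] = fun _ => q ^ K := condExp_const (hmle i) _
      have h3 : P[g | m' i] =ᵐ[P] ∑ k ∈ Finset.range K, P[w k • ind k | m' i] :=
        condExp_finsetSum (fun k _ => (hind_int k).smul (w k)) (m' i)
      have h4 : ∀ᵐ ω ∂P, ∀ k : ℕ, (P[w k • ind k | m' i]) ω = (w k • P[ind k | m' i]) ω :=
        ae_all_iff.2 fun k => condExp_smul (w k) (ind k) (m' i)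
      have h5 : ∀ᵐ ω ∂P, ∀ k : ℕ, (P[ind k | m' i]) ω ≤ a + b * (((k:ℝ) + 1) * s) :=
        ae_all_iff.2 fun k => hcond i (((k:ℝ) + 1) * s) (by positivity)
      filter_upwards [h1, h2, h3, h4, h5] with ω hω1 hω2 hω3 hω4 hω5
      have hw0 : ∀ k : ℕ, 0 ≤ w k := by
        intro k
        have : q ^ (k + 1) ≤ q ^ k := pow_le_pow_of_le_one hq0.le hq1.le (Nat.le_succ k)
        rw [hw_def]; dsimp only; linarith
      have hsum_le : ∑ k ∈ Finset.range K, w k * (P[ind k | m' i]) ω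
          ≤ ∑ k ∈ Finset.range K, (q ^ k - q ^ (k + 1)) * (a + (b * s) * ((k:ℝ) + 1)) := by
        refine Finset.sum_le_sum fun k _ => ?_
        calc w k * (P[ind k | m' i]) ω
            ≤ w k * (a + b * (((k:ℝ) + 1) * s)) :=
              mul_le_mul_of_nonneg_left (hω5 k) (hw0 k)
          _ = (q ^ k - q ^ (k + 1)) * (a + (b * s) * ((k:ℝ) + 1)) := by
              rw [hw_def]; ring
      have haux2 := aux_cK_le a (b * s) q K ha0.le (by positivity) hq0.le hq1
      calc (P[(fun ω => Real.exp (-(L * η i ω))) | m' i]) ω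
          ≤ (P[(g + fun _ => q ^ K) | m' i]) ω := hω1
        _ = (P[g | m' i]) ω + q ^ K := by rw [hω2, Pi.add_apply, h2']
        _ = (∑ k ∈ Finset.range K, P[w k • ind k | m' i]) ω + q ^ K := by rw [hω3]
        _ = ∑ k ∈ Finset.range K, w k * (P[ind k | m' i]) ω + q ^ K := by
            rw [Finset.sum_apply]
            congr 1
            refine Finset.sum_congr rfl fun k _ => ?_
            rw [hω4 k, Pi.smul_apply, smul_eq_mul]
        _ ≤ ∑ k ∈ Finset.range K, (q ^ k - q ^ (k + 1)) * (a + (b * s) * ((k:ℝ) + 1)) + q ^ K := by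
            linarith [hsum_le]
        _ ≤ a + b * s / (1 - q) + q ^ K := haux2
        _ ≤ c := hcK
    -- induction over the number of factors
    have main : ∀ N : ℕ, N ≤ n →
        ∫ ω, ∏ j ∈ Finset.univ.filter (fun j : Fin n => (j:ℕ) < N),
          Real.exp (-(L * η j ω)) ∂P ≤ c ^ N := by
      intro N
      induction N with
      | zero =>
        intro _
        have hempty : Finset.univ.filter (fun j : Fin n => (j:ℕ) < 0) = ∅ :=
          Finset.filter_false_of_mem fun j _ => by omega
        simp [hempty]
      | succ N ih =>
        intro hN
        have hNn : N < n := hN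
        have ihN := ih (Nat.le_of_succ_le hN)
        set I : Fin n := ⟨N, hNn⟩ with hI_def
        set S : Finset (Fin n) := Finset.univ.filter (fun j : Fin n => (j:ℕ) < N) with hS_def
        have hfilter : Finset.univ.filter (fun j : Fin n => (j:ℕ) < N + 1) = insert I S := by
          ext j
          simp only [Finset.mem_filter, Finset.mem_univ, true_and, Finset.mem_insert, hS_def,
            hI_def]
          constructor
          · intro hj
            rcases Nat.lt_succ_iff_lt_or_eq.mp hj with h | h
            · exact Or.inr (by simp [Finset.mem_filter, h])
            · exact Or.inl (Fin.ext h)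
          · rintro (rfl | hj)
            · exact Nat.lt_succ_self N
            · exact Nat.lt_succ_of_lt hj
        have hInotS : I ∉ S := by
          rw [hS_def]
          simp [hI_def]
        set fI : Ω → ℝ := fun ω => Real.exp (-(L * η I ω)) with hfI_def
        set G : Ω → ℝ := fun ω => ∏ j ∈ S, Real.exp (-(L * η j ω)) with hG_def
        have hG0 : ∀ ω, 0 ≤ G ω := fun ω => Finset.prod_nonneg fun j _ => (Real.exp_pos _).le
        have hG1 : ∀ ω, G ω ≤ 1 := fun ω =>
          Finset.prod_le_one (fun j _ => (Real.exp_pos _).le) (fun j _ => hexp1 j ω)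
        have hGm0 : Measurable G := Finset.measurable_prod S fun j _ => hexp_meas j
        have hG_int : Integrable G P := hbdd_int G hGm0 hG0 hG1
        have hGmsm : StronglyMeasurable[m' I] G := by
          refine Measurable.stronglyMeasurable ?_
          refine Finset.measurable_prod S fun j hj => ?_
          have hj' : (j:ℕ) < (I:ℕ) := (Finset.mem_filter.mp hj).2
          have hle : MeasurableSpace.comap (η j) inferInstance ≤ m' I :=
            le_iSup₂ (f := fun (j : Fin n) (_ : (j:ℕ) < (I:ℕ)) =>
              MeasurableSpace.comap (η j) inferInstance) j hj'
          have hηj : @Measurable Ω ℝ (m' I) _ (η j) := by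
            rw [measurable_iff_comap_le]; exact hle
          exact Real.measurable_exp.comp ((hηj.const_mul L).neg)
        have hfI_int : Integrable fI P :=
          hbdd_int _ (hexp_meas I) (fun ω => (Real.exp_pos _).le) (fun ω => hexp1 I ω)
        have hGf_int : Integrable (G * fI) P := by
          refine hbdd_int _ (hGm0.mul (hexp_meas I)) (fun ω => ?_) (fun ω => ?_)
          · exact mul_nonneg (hG0 ω) (Real.exp_pos _).le
          · exact mul_le_one₀ (hG1 ω) (Real.exp_pos _).le (hexp1 I ω)
        have hpull : P[(G * fI) | m' I] =ᵐ[P] G * P[fI | m' I] :=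
          condExp_mul_of_stronglyMeasurable_left hGmsm hGf_int hfI_int
        have hmul_int : Integrable (fun ω => (G * P[fI | m' I]) ω) P := by
          refine Integrable.bdd_mul (c := 1) integrable_condExp hGm0.aestronglyMeasurable (Filter.Eventually.of_forall fun ω => ?_)
          rw [Real.norm_eq_abs, abs_of_nonneg (hG0 ω)]
          exact hG1 ω
        calc ∫ ω, ∏ j ∈ Finset.univ.filter (fun j : Fin n => (j:ℕ) < N + 1),
              Real.exp (-(L * η j ω)) ∂P
            = ∫ ω, (G * fI) ω ∂P := by
              refine integral_congr_ae (Filter.Eventually.of_forall fun ω => ?_)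
              simp only [hfilter, Finset.prod_insert hInotS, Pi.mul_apply, hG_def, hfI_def]
              exact mul_comm _ _
          _ = ∫ ω, (P[(G * fI) | m' I]) ω ∂P := (integral_condExp (hmle I)).symm
          _ = ∫ ω, (G * P[fI | m' I]) ω ∂P := integral_congr_ae hpull
          _ ≤ ∫ ω, G ω * c ∂P := by
              refine integral_mono_ae hmul_int (hG_int.mul_const c) ?_
              filter_upwards [hcond_exp I] with ω hω
              rw [Pi.mul_apply]
              exact mul_le_mul_of_nonneg_left hω (hG0 ω)
          _ = (∫ ω, G ω ∂P) * c := integral_mul_const c G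
          _ ≤ c ^ N * c := mul_le_mul_of_nonneg_right ihN hc0.le
          _ = c ^ (N + 1) := (pow_succ c N).symm
    -- assemble
    have hAll : Finset.univ.filter (fun j : Fin n => (j:ℕ) < n) = (Finset.univ : Finset (Fin n)) :=
      Finset.filter_true_of_mem fun j _ => j.isLt
    have hGn_meas : Measurable (fun ω => ∏ j : Fin n, Real.exp (-(L * η j ω))) :=
      Finset.measurable_prod _ fun j _ => hexp_meas j
    have hGn_int : Integrable (fun ω => ∏ j : Fin n, Real.exp (-(L * η j ω))) P :=
      hbdd_int _ hGn_meas
        (fun ω => Finset.prod_nonneg fun j _ => (Real.exp_pos _).le)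
        (fun ω => Finset.prod_le_one (fun j _ => (Real.exp_pos _).le) (fun j _ => hexp1 j ω))
    have hind_int : Integrable (A.indicator (fun _ => (1:ℝ))) P := (integrable_const 1).indicator hA
    have hpt : ∀ ω, A.indicator (fun _ => (1:ℝ)) ω
        ≤ Real.exp (L * t) * ∏ j : Fin n, Real.exp (-(L * η j ω)) := by
      intro ω
      have hprod : ∏ j : Fin n, Real.exp (-(L * η j ω)) = Real.exp (∑ j : Fin n, -(L * η j ω)) :=
        (Real.exp_sum _ _).symm
      by_cases hω : ω ∈ A
      · rw [Set.indicator_of_mem hω]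
        have hΦω : Φ ω ≤ t := hω
        have hsω : ∑ j : Fin n, η j ω ≤ t := le_trans (hsum ω) hΦω
        rw [hprod, ← Real.exp_add]
        refine Real.one_le_exp ?_
        have hexpand : ∑ j : Fin n, -(L * η j ω) = -(L * ∑ j : Fin n, η j ω) := by
          rw [Finset.mul_sum, ← Finset.sum_neg_distrib]
        rw [hexpand]
        nlinarith [hsω, hL]
      · rw [Set.indicator_of_notMem hω]
        positivity
    calc (P A).toReal = ∫ ω, A.indicator (fun _ => (1:ℝ)) ω ∂P :=
          (integral_indicator_one hA).symm
      _ ≤ ∫ ω, Real.exp (L * t) * ∏ j : Fin n, Real.exp (-(L * η j ω)) ∂P :=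
          integral_mono hind_int (hGn_int.const_mul _) hpt
      _ = Real.exp (L * t) * ∫ ω, ∏ j : Fin n, Real.exp (-(L * η j ω)) ∂P :=
          integral_const_mul _ _
      _ ≤ Real.exp (L * t) * (a + b / L + ε) ^ n := by
          have hmn := main n le_rfl
          rw [hAll] at hmn
          rw [← hc_def]
          exact mul_le_mul_of_nonneg_left hmn (Real.exp_pos _).le
  -- pass to the limit ε → 0
  have hM : (P A).toReal ≤ Real.exp (L * t) * (a + b / L) ^ n := by
    have hcontf : Continuous (fun ε : ℝ => Real.exp (L * t) * (a + b / L + ε) ^ n) := by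
      continuity
    have htend : Filter.Tendsto (fun ε : ℝ => Real.exp (L * t) * (a + b / L + ε) ^ n)
        (nhdsWithin 0 (Set.Ioi 0)) (nhds (Real.exp (L * t) * (a + b / L) ^ n)) := by
      have h0 := hcontf.tendsto 0
      simp only [add_zero] at h0
      exact h0.mono_left (nhdsWithin_le_nhds (s := Set.Ioi (0:ℝ)))
    refine ge_of_tendsto htend ?_
    filter_upwards [self_mem_nhdsWithin] with ε hε
    exact key ε hε
  have hbL : 0 < a + b / L := by positivity
  have hMpos : 0 < Real.exp (L * t) * (a + b / L) ^ n := by positivity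
  have hM' : P A ≤ ENNReal.ofReal (Real.exp (L * t) * (a + b / L) ^ n) := by
    rw [← ENNReal.ofReal_toReal (measure_ne_top P A)]
    exact ENNReal.ofReal_le_ofReal hM
  -- the real-number inequality
  have e1 : Real.sqrt (b * n * t / a) = L * t := by
    rw [show b * (n:ℝ) * t / a = (L * t) ^ 2 by
      rw [mul_pow, hL2]; field_simp]
    exact Real.sqrt_sq (by positivity)
  have e2 : (n:ℝ) * (b / L) / a = L * t := by
    have h2 : L ^ 2 * (a * t) = b * n := by rw [hL2]; field_simp
    field_simp
    nlinarith [h2]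
  have hlog_le : Real.log (a + b / L) ≤ Real.log a + (b / L) / a := by
    have hdiv : (0:ℝ) < (a + b / L) / a := by positivity
    have := Real.log_le_sub_one_of_pos hdiv
    rw [Real.log_div (by positivity) (ne_of_gt ha0)] at this
    have harith : (a + b / L) / a - 1 = (b / L) / a := by field_simp; ring
    linarith [this, harith.le]
  have hreal : Real.log (Real.exp (L * t) * (a + b / L) ^ n)
      ≤ 2 * Real.sqrt (b * n * t / a) - n * Real.log (1 / a) := by
    rw [Real.log_mul (by positivity) (by positivity), Real.log_exp, Real.log_pow]
    have h3 : (n:ℝ) * Real.log (a + b / L) ≤ (n:ℝ) * (Real.log a + (b / L) / a) :=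
      mul_le_mul_of_nonneg_left hlog_le (by positivity)
    have h4 : Real.log (1 / a) = - Real.log a := by
      rw [one_div, Real.log_inv]
    have e2' : (n:ℝ) * (Real.log a + (b / L) / a) = (n:ℝ) * Real.log a + L * t := by
      rw [← e2]; ring
    rw [e1, h4]
    linarith [h3, e2']
  calc ENNReal.log (P A)
      ≤ ENNReal.log (ENNReal.ofReal (Real.exp (L * t) * (a + b / L) ^ n)) :=
        ENNReal.log_monotone hM'
    _ = ((Real.log (Real.exp (L * t) * (a + b / L) ^ n) : ℝ) : EReal) :=
        ENNReal.log_ofReal_of_pos hMpos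
    _ ≤ ((2 * Real.sqrt (b * n * t / a) - n * Real.log (1 / a) : ℝ) : EReal) := by
        exact_mod_cast EReal.coe_le_coe_iff.2 hreal
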